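/- arXiv:2402.09850 — 4 statements merged into one kernel-verified Lean document; each statement's English description precedes it below -/
import Mathlib

section
/- Let r(t) = Σ_{j=0}^m p_j b^m_j(t) and s(t) = Σ_{j=0}^n q_j b^n_j(t) be complex polynomials in Bernstein form, and let z_k = Σ_{j=max(0,k−n)}^{min(m,k)} [C(m,j)·C(n,k−j)/C(m+n,k)]·p_j·conj(q_{k−j}) for k = 0,…,m+n. Then the inner product satisfies ⟨r,s⟩ = (z_0 + z_1 + ⋯ + z_{m+n})/(m+n+1). -/
open MeasureTheory

set_option maxHeartbeats 1000000

/-- The Bernstein basis polynomial b^n_k(t) = C(n,k)(1−t)^{n−k} t^k on [0,1]. -/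
noncomputable def bern (n k : ℕ) (t : ℝ) : ℝ :=
  (n.choose k : ℝ) * (1 - t) ^ (n - k) * t ^ k

lemma fact_prod (a b : ℕ) :
    ((a.factorial) : ℂ) * ∏ j ∈ Finset.range (b + 1), ((a : ℂ) + 1 + j) = (((a+b+1).factorial) : ℂ) := by
  induction b with
  | zero => simp [Nat.factorial_succ]; push_cast; ring
  | succ b ih =>
    rw [Finset.prod_range_succ, ← mul_assoc, ih]
    have : ((a+(b+1)+1).factorial) = (a + b + 1 + 1) * ((a+b+1).factorial) := by
      rw [← Nat.factorial_succ]; ring_nf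
    rw [this]; push_cast; ring

lemma betaC (a b : ℕ) :
    (∫ t in (0:ℝ)..1, (t:ℂ) ^ a * (1 - (t:ℂ)) ^ b)
      = (((a.factorial) : ℕ) : ℂ) * (((b.factorial) : ℕ) : ℂ) / ((((a+b+1).factorial) : ℕ) : ℂ) := by
  have h := Complex.betaIntegral_eval_nat_add_one_right (u := (a : ℂ) + 1) (by simp; positivity) b
  rw [Complex.betaIntegral] at h
  have heq : (∫ t in (0:ℝ)..1, (t:ℂ) ^ a * (1 - (t:ℂ)) ^ b)
      = ∫ x : ℝ in (0:ℝ)..1, (x:ℂ) ^ ((a:ℂ) + 1 - 1) * (1 - (x:ℂ)) ^ (((b:ℂ) + 1) - 1) := by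
    apply intervalIntegral.integral_congr
    intro x _
    simp only [add_sub_cancel_right]
    rw [Complex.cpow_natCast, Complex.cpow_natCast]
  rw [heq, h]
  rw [div_eq_div_iff]
  · rw [mul_comm (((a.factorial) : ℕ):ℂ), mul_assoc, fact_prod]
  · intro hc
    have := fact_prod a b
    rw [hc, mul_zero] at this
    exact (Nat.cast_ne_zero.mpr (Nat.factorial_ne_zero _)) this.symm
  · exact Nat.cast_ne_zero.mpr (Nat.factorial_ne_zero _)

lemma bern_inner (m n j i : ℕ) (hj : j ≤ m) (hi : i ≤ n) :
    (∫ t in (0:ℝ)..1, ((bern m j t : ℝ) : ℂ) * ((bern n i t : ℝ) : ℂ))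
      = (m.choose j : ℂ) * (n.choose i : ℂ) *
          (((j+i).factorial : ℕ) : ℂ) * ((((m+n)-(j+i)).factorial : ℕ) : ℂ)
          / ((((m+n+1).factorial) : ℕ) : ℂ) := by
  have key : ∀ t : ℝ, ((bern m j t : ℝ) : ℂ) * ((bern n i t : ℝ) : ℂ)
      = ((m.choose j : ℂ) * (n.choose i : ℂ)) *
        ((t:ℂ) ^ (j+i) * (1 - (t:ℂ)) ^ ((m-j)+(n-i))) := by
    intro t; unfold bern; push_cast; ring
  rw [intervalIntegral.integral_congr (g := fun t =>
      ((m.choose j : ℂ) * (n.choose i : ℂ)) *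
        ((t:ℂ) ^ (j+i) * (1 - (t:ℂ)) ^ ((m-j)+(n-i)))) (fun t _ => key t),
    intervalIntegral.integral_const_mul, betaC]
  have h1 : (m-j)+(n-i) = (m+n)-(j+i) := by omega
  have h2 : (j+i) + ((m+n)-(j+i)) + 1 = m+n+1 := by
    omega
  rw [h1, h2]
  ring

lemma reindex (m n : ℕ) (f : ℕ → ℕ → ℂ) :
    ∑ j ∈ Finset.range (m+1), ∑ i ∈ Finset.range (n+1), f j i
      = ∑ k ∈ Finset.range (m+n+1), ∑ j ∈ Finset.Icc (max 0 (k-n)) (min m k), f j (k-j) := by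
  rw [Finset.sum_sigma', Finset.sum_sigma']
  apply Finset.sum_nbij' (i := fun x => (⟨x.1 + x.2, x.1⟩ : Σ _ : ℕ, ℕ))
    (j := fun x => (⟨x.2, x.1 - x.2⟩ : Σ _ : ℕ, ℕ))
  · intro x hx
    simp only [Finset.mem_sigma, Finset.mem_range, Finset.mem_Icc] at *
    omega
  · intro x hx
    simp only [Finset.mem_sigma, Finset.mem_range, Finset.mem_Icc] at *
    omega
  · intro x hx
    simp only [Finset.mem_sigma, Finset.mem_range, Finset.mem_Icc] at hx
    ext <;> simp <;> omega
  · intro x hx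
    simp only [Finset.mem_sigma, Finset.mem_range, Finset.mem_Icc] at hx
    ext <;> simp <;> omega
  · intro x hx
    simp only [Finset.mem_sigma, Finset.mem_range, Finset.mem_Icc] at hx
    simp

/-- For r(t) = Σ_{j=0}^m p_j b^m_j(t), s(t) = Σ_{j=0}^n q_j b^n_j(t) in Bernstein form and
z_k = Σ_{j=max(0,k−n)}^{min(m,k)} [C(m,j)·C(n,k−j)/C(m+n,k)]·p_j·conj(q_{k−j}), the
inner product satisfies ⟨r,s⟩ = (z_0 + ⋯ + z_{m+n})/(m+n+1). -/
theorem stmt5 (m n : ℕ) (p q z : ℕ → ℂ)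
    (hz : ∀ k, k ≤ m + n → z k =
      ∑ j ∈ Finset.Icc (max 0 (k - n)) (min m k),
        (((m.choose j : ℕ) : ℂ) * ((n.choose (k - j) : ℕ) : ℂ) / (((m + n).choose k : ℕ) : ℂ))
          * p j * (starRingEnd ℂ) (q (k - j))) :
    (∫ t in (0:ℝ)..1,
        (∑ j ∈ Finset.range (m + 1), p j * (bern m j t : ℂ)) *
          (starRingEnd ℂ) (∑ j ∈ Finset.range (n + 1), q j * (bern n j t : ℂ)))
      = (∑ k ∈ Finset.range (m + n + 1), z k) / ((m + n + 1 : ℕ) : ℂ) := by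
  have hcont : ∀ N k : ℕ, Continuous fun t : ℝ => ((bern N k t : ℝ) : ℂ) := by
    intro N k
    apply Complex.continuous_ofReal.comp
    unfold bern; continuity
  have hfun : ∀ t : ℝ,
      (∑ j ∈ Finset.range (m + 1), p j * (bern m j t : ℂ)) *
          (starRingEnd ℂ) (∑ i ∈ Finset.range (n + 1), q i * (bern n i t : ℂ))
        = ∑ j ∈ Finset.range (m+1), ∑ i ∈ Finset.range (n+1),
            (p j * (starRingEnd ℂ) (q i)) * (((bern m j t : ℝ):ℂ) * ((bern n i t : ℝ):ℂ)) := by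
    intro t
    rw [map_sum, Finset.sum_mul_sum]
    refine Finset.sum_congr rfl fun j _ => Finset.sum_congr rfl fun i _ => ?_
    rw [map_mul, Complex.conj_ofReal]
    ring
  rw [intervalIntegral.integral_congr (fun t _ => hfun t)]
  rw [intervalIntegral.integral_finset_sum
    (f := fun (j : ℕ) (t : ℝ) => ∑ i ∈ Finset.range (n+1),
      (p j * (starRingEnd ℂ) (q i)) * (((bern m j t : ℝ):ℂ) * ((bern n i t : ℝ):ℂ)))
    (fun j _ => Continuous.intervalIntegrable (continuous_finset_sum _ fun i _ =>
      continuous_const.mul ((hcont m j).mul (hcont n i))) _ _)]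
  have : ∀ j ∈ Finset.range (m+1),
      (∫ t in (0:ℝ)..1, ∑ i ∈ Finset.range (n+1),
        (p j * (starRingEnd ℂ) (q i)) * (((bern m j t : ℝ):ℂ) * ((bern n i t : ℝ):ℂ)))
      = ∑ i ∈ Finset.range (n+1), (p j * (starRingEnd ℂ) (q i)) *
          ((m.choose j : ℂ) * (n.choose i : ℂ) *
          (((j+i).factorial : ℕ) : ℂ) * ((((m+n)-(j+i)).factorial : ℕ) : ℂ)
          / ((((m+n+1).factorial) : ℕ) : ℂ)) := by
    intro j hj
    rw [intervalIntegral.integral_finset_sum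
      (f := fun (i : ℕ) (t : ℝ) => (p j * (starRingEnd ℂ) (q i)) * (((bern m j t : ℝ):ℂ) * ((bern n i t : ℝ):ℂ)))
      (fun i _ =>
      Continuous.intervalIntegrable (continuous_const.mul ((hcont m j).mul (hcont n i))) _ _)]
    refine Finset.sum_congr rfl fun i hi => ?_
    rw [intervalIntegral.integral_const_mul,
      bern_inner m n j i (by simp at hj; omega) (by simp at hi; omega)]
  rw [Finset.sum_congr rfl this, reindex m n (fun j i => (p j * (starRingEnd ℂ) (q i)) *
          ((m.choose j : ℂ) * (n.choose i : ℂ) *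
          (((j+i).factorial : ℕ) : ℂ) * ((((m+n)-(j+i)).factorial : ℕ) : ℂ)
          / ((((m+n+1).factorial) : ℕ) : ℂ))), Finset.sum_div]
  refine Finset.sum_congr rfl fun k hk => ?_
  simp only [Finset.mem_range] at hk
  have hk' : k ≤ m + n := by omega
  rw [hz k hk', Finset.sum_div]
  refine Finset.sum_congr rfl fun j hj => ?_
  simp only [Finset.mem_Icc] at hj
  have hjk : j + (k - j) = k := by omega
  rw [hjk]
  have hnat : (m+n).choose k * (k.factorial * ((m+n)-k).factorial) * (m+n+1)
      = (m+n+1).factorial := by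
    rw [show (m+n).choose k * (k.factorial * ((m+n)-k).factorial) * (m+n+1)
      = (m+n).choose k * k.factorial * ((m+n)-k).factorial * (m+n+1) by ring,
      Nat.choose_mul_factorial_mul_factorial hk', Nat.factorial_succ (m+n)]
    ring
  have hc0 : ((m+n).choose k : ℂ) ≠ 0 :=
    Nat.cast_ne_zero.mpr (Nat.choose_pos hk').ne'
  have hf0 : (((m+n+1).factorial : ℕ) : ℂ) ≠ 0 :=
    Nat.cast_ne_zero.mpr (Nat.factorial_ne_zero _)
  have hm0 : ((m+n+1 : ℕ) : ℂ) ≠ 0 := Nat.cast_ne_zero.mpr (by omega)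
  have hnatC : ((m+n).choose k : ℂ) * ((k.factorial : ℂ) * (((m+n)-k).factorial : ℂ))
      * ((m+n+1 : ℕ) : ℂ) = (((m+n+1).factorial : ℕ) : ℂ) := by
    push_cast [← hnat]; ring
  have key : ((k.factorial : ℂ) * (((m+n)-k).factorial : ℂ)) / (((m+n+1).factorial : ℕ) : ℂ)
      = 1 / (((m+n).choose k : ℂ) * ((m+n+1 : ℕ) : ℂ)) := by
    rw [div_eq_div_iff hf0 (mul_ne_zero hc0 hm0)]
    linear_combination hnatC
  calc p j * (starRingEnd ℂ) (q (k-j)) * ((m.choose j : ℂ) * (n.choose (k-j) : ℂ)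
          * ((k.factorial : ℕ) : ℂ) * ((((m+n)-k).factorial : ℕ) : ℂ)
          / (((m+n+1).factorial : ℕ) : ℂ))
      = p j * (starRingEnd ℂ) (q (k-j)) * ((m.choose j : ℂ) * (n.choose (k-j) : ℂ)
          * (((k.factorial : ℂ) * (((m+n)-k).factorial : ℂ)) / (((m+n+1).factorial : ℕ) : ℂ))) := by
        ring
    _ = p j * (starRingEnd ℂ) (q (k-j)) * ((m.choose j : ℂ) * (n.choose (k-j) : ℂ)
          * (1 / (((m+n).choose k : ℂ) * ((m+n+1 : ℕ) : ℂ)))) := by rw [key]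
    _ = ((m.choose j : ℂ) * (n.choose (k-j) : ℂ) / (((m+n).choose k : ℕ) : ℂ)
          * p j * (starRingEnd ℂ) (q (k-j))) / ((m+n+1 : ℕ) : ℂ) := by
        field_simp
end

section
/- Let p(t) be a polynomial of degree at most n expressed in the shifted Legendre and Bernstein bases on [0,1] as p(t) = Σ_{k=0}^n c_k L_k(t) = Σ_{j=0}^n d_j b^n_j(t). Then the coefficient vectors are related by d_j = Σ_{k=0}^n M_{n,jk} c_k for j = 0,…,n, where M_{n,jk} = [√(2k+1)/C(n,j)]·Σ_{i=max(0,j+k−n)}^{min(j,k)} (−1)^{k+i} C(k,i)² C(n−k, j−i). Equivalently, L_k(t) = Σ_{j=0}^n M_{n,jk} b^n_j(t) for each k = 0,…,n. -/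
/-- The orthonormal shifted Legendre polynomial on [0,1]:
L_k(t) = √(2k+1)·Σ_{i=0}^k (−1)^{k+i} C(k,i)² (1−t)^{k−i} t^i. -/
noncomputable def legendreL (k : ℕ) (t : ℝ) : ℝ :=
  Real.sqrt (2 * k + 1) * ∑ i ∈ Finset.range (k + 1),
    (-1 : ℝ) ^ (k + i) * (k.choose i : ℝ) ^ 2 * (1 - t) ^ (k - i) * t ^ i

/-- Entry (j,k) of the matrix M_n converting shifted Legendre coefficients to degree-n
Bernstein coefficients:
M_{n,jk} = [√(2k+1)/C(n,j)]·Σ_{i=max(0,j+k−n)}^{min(j,k)} (−1)^{k+i} C(k,i)² C(n−k,j−i). -/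
noncomputable def Mentry (n j k : ℕ) : ℝ :=
  (Real.sqrt (2 * k + 1) / (n.choose j : ℝ)) *
    ∑ i ∈ Finset.Icc (max 0 (j + k - n)) (min j k),
      (-1 : ℝ) ^ (k + i) * (k.choose i : ℝ) ^ 2 * ((n - k).choose (j - i) : ℝ)

open Finset

lemma inner_expand (n k : ℕ) (hk : k ≤ n) (t : ℝ) :
    ∑ i ∈ range (k + 1), (-1:ℝ)^(k+i) * (k.choose i:ℝ)^2 * (1-t)^(k-i) * t^i
    = ∑ j ∈ range (n + 1), ∑ i ∈ Finset.Icc (max 0 (j + k - n)) (min j k),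
        (-1:ℝ)^(k+i) * (k.choose i:ℝ)^2 * ((n-k).choose (j-i):ℝ) * ((1-t)^(n-j) * t^j) := by
  have h1 : ∀ i ∈ range (k+1), (-1:ℝ)^(k+i) * (k.choose i:ℝ)^2 * (1-t)^(k-i) * t^i
      = ∑ m ∈ range (n - k + 1),
          (-1:ℝ)^(k+i) * (k.choose i:ℝ)^2 * ((n-k).choose m : ℝ) * ((1-t)^(n-(i+m)) * t^(i+m)) := by
    intro i hi
    have hi' : i ≤ k := by simpa [Nat.lt_succ_iff] using hi
    have hone : ((-1:ℝ)^(k+i) * (k.choose i:ℝ)^2 * (1-t)^(k-i) * t^i)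
        = ((-1:ℝ)^(k+i) * (k.choose i:ℝ)^2 * (1-t)^(k-i) * t^i) * (t + (1-t))^(n-k) := by
      simp
    rw [hone, add_pow, Finset.mul_sum]
    refine Finset.sum_congr rfl fun m hm => ?_
    have hm' : m ≤ n - k := by simpa [Nat.lt_succ_iff] using hm
    rw [show n - (i+m) = (k-i) + (n-k-m) by omega, show i + m = m + i by omega,
      pow_add, pow_add]
    ring
  rw [Finset.sum_congr rfl h1, Finset.sum_sigma', Finset.sum_sigma']
  refine Finset.sum_nbij' (fun p => ⟨p.1 + p.2, p.1⟩) (fun q => ⟨q.2, q.1 - q.2⟩)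
    ?_ ?_ ?_ ?_ ?_
  · rintro ⟨i, m⟩ hp
    simp only [Finset.mem_sigma, Finset.mem_range, Finset.mem_Icc, le_min_iff, max_le_iff, min_le_iff, le_max_iff] at hp ⊢
    omega
  · rintro ⟨j, i⟩ hq
    simp only [Finset.mem_sigma, Finset.mem_range, Finset.mem_Icc, le_min_iff, max_le_iff, min_le_iff, le_max_iff] at hq ⊢
    omega
  · rintro ⟨i, m⟩ hp
    simp
  · rintro ⟨j, i⟩ hq
    simp only [Finset.mem_sigma, Finset.mem_range, Finset.mem_Icc, le_min_iff, max_le_iff, min_le_iff, le_max_iff] at hq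
    simp only [Sigma.mk.inj_iff, heq_eq_eq]
    exact ⟨by omega, trivial⟩
  · rintro ⟨i, m⟩ hp
    simp

lemma key_id (n k : ℕ) (hk : k ≤ n) (t : ℝ) :
    legendreL k t = ∑ j ∈ range (n + 1), Mentry n j k * bern n j t := by
  have hs : ∀ j ∈ range (n+1), Mentry n j k * bern n j t
      = Real.sqrt (2*k+1) * ∑ i ∈ Finset.Icc (max 0 (j + k - n)) (min j k),
          (-1:ℝ)^(k+i) * (k.choose i:ℝ)^2 * ((n-k).choose (j-i):ℝ) * ((1-t)^(n-j) * t^j) := by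
    intro j hj
    have hj' : j ≤ n := by simpa [Nat.lt_succ_iff] using hj
    have hC : (n.choose j : ℝ) ≠ 0 := by
      exact_mod_cast (Nat.choose_pos hj').ne'
    rw [Mentry, bern]
    simp only [Finset.mul_sum, Finset.sum_mul]
    refine Finset.sum_congr rfl fun i _ => ?_
    field_simp
  rw [legendreL]
  rw [inner_expand n k hk t, Finset.mul_sum]
  exact (Finset.sum_congr rfl hs).symm

lemma mono_zero (N : ℕ) (a : ℕ → ℝ)
    (h : ∀ t : ℝ, ∑ m ∈ Finset.range N, a m * t ^ m = 0) :
    ∀ m < N, a m = 0 := by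
  have hP : (∑ m ∈ Finset.range N, Polynomial.C (a m) * Polynomial.X ^ m)
      = (0 : Polynomial ℝ) := by
    apply Polynomial.funext
    intro t
    simpa [Polynomial.eval_finset_sum] using h t
  intro m hm
  have h2 := congrArg (fun p => Polynomial.coeff p m) hP
  simpa [Polynomial.finset_sum_coeff, Polynomial.coeff_C_mul, Polynomial.coeff_X_pow,
    Finset.sum_ite_eq, Finset.mem_range, hm] using h2

lemma bern_expand2 (n : ℕ) (e : ℕ → ℝ) (t : ℝ) :
    ∑ j ∈ range (n+1), e j * bern n j t
    = ∑ m ∈ range (n+1),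
        (∑ j ∈ range (m+1),
          e j * (n.choose j : ℝ) * ((n-j).choose (m-j) : ℝ) * (-1:ℝ)^(m-j)) * t^m := by
  have h1 : ∀ j ∈ range (n+1), e j * bern n j t
      = ∑ r ∈ range (n-j+1),
          e j * (n.choose j:ℝ) * ((n-j).choose r : ℝ) * (-1:ℝ)^r * t^(j+r) := by
    intro j hj
    rw [bern, show (1-t:ℝ) = -t + 1 by ring, add_pow]
    simp only [Finset.mul_sum, Finset.sum_mul]
    refine Finset.sum_congr rfl fun r _ => ?_
    rw [neg_pow, one_pow, pow_add]
    ring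
  rw [Finset.sum_congr rfl h1]
  simp only [Finset.sum_mul]
  rw [Finset.sum_sigma', Finset.sum_sigma']
  refine Finset.sum_nbij' (fun p => ⟨p.1 + p.2, p.1⟩) (fun q => ⟨q.2, q.1 - q.2⟩)
    ?_ ?_ ?_ ?_ ?_
  · rintro ⟨j, r⟩ hp
    simp only [Finset.mem_sigma, Finset.mem_range] at hp ⊢
    omega
  · rintro ⟨m, j⟩ hq
    simp only [Finset.mem_sigma, Finset.mem_range] at hq ⊢
    omega
  · rintro ⟨j, r⟩ _
    simp
  · rintro ⟨m, j⟩ hq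
    simp only [Finset.mem_sigma, Finset.mem_range] at hq
    simp only [Sigma.mk.inj_iff, heq_eq_eq]
    exact ⟨by omega, trivial⟩
  · rintro ⟨j, r⟩ _
    simp

lemma bern_inj (n : ℕ) (e : ℕ → ℝ)
    (h : ∀ t : ℝ, ∑ j ∈ range (n+1), e j * bern n j t = 0) :
    ∀ j ≤ n, e j = 0 := by
  have ha := mono_zero (n+1)
    (fun m => ∑ j ∈ range (m+1),
      e j * (n.choose j : ℝ) * ((n-j).choose (m-j) : ℝ) * (-1:ℝ)^(m-j))
    (fun t => by rw [← bern_expand2]; exact h t)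
  intro j
  induction j using Nat.strong_induction_on with
  | _ j ih =>
    intro hj
    have h0 := ha j (by omega)
    rw [Finset.sum_range_succ] at h0
    rw [Finset.sum_eq_zero (fun x hx => by
      rw [ih x (Finset.mem_range.mp hx) (by have := Finset.mem_range.mp hx; omega)]
      ring)] at h0
    simp only [Nat.sub_self, Nat.choose_zero_right, pow_zero, Nat.cast_one, mul_one,
      zero_add] at h0
    have hC : (n.choose j : ℝ) ≠ 0 := by
      exact_mod_cast (Nat.choose_pos hj).ne'
    rcases mul_eq_zero.mp h0 with h' | h'
    · exact h'
    · exact absurd h' hC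

/-- If p(t) = Σ_{k=0}^n c_k L_k(t) = Σ_{j=0}^n d_j b^n_j(t) is a polynomial of degree at most n
expressed in the shifted Legendre and Bernstein bases, then d_j = Σ_{k=0}^n M_{n,jk} c_k for
j = 0,…,n; equivalently L_k(t) = Σ_{j=0}^n M_{n,jk} b^n_j(t) for each k = 0,…,n. -/
theorem stmt14 (n : ℕ) (c d : ℕ → ℝ)
    (h : ∀ t : ℝ, ∑ k ∈ Finset.range (n + 1), c k * legendreL k t
        = ∑ j ∈ Finset.range (n + 1), d j * bern n j t) :
    (∀ j, j ≤ n → d j = ∑ k ∈ Finset.range (n + 1), Mentry n j k * c k) ∧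
    (∀ k, k ≤ n → ∀ t : ℝ,
        legendreL k t = ∑ j ∈ Finset.range (n + 1), Mentry n j k * bern n j t) := by
  have part2 : ∀ k, k ≤ n → ∀ t : ℝ,
      legendreL k t = ∑ j ∈ Finset.range (n + 1), Mentry n j k * bern n j t :=
    fun k hk t => key_id n k hk t
  refine ⟨?_, part2⟩
  have hz : ∀ t : ℝ, ∑ j ∈ range (n+1),
      ((∑ k ∈ range (n+1), Mentry n j k * c k) - d j) * bern n j t = 0 := by
    intro t
    have h2 : ∑ j ∈ range (n+1), (∑ k ∈ range (n+1), Mentry n j k * c k) * bern n j t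
        = ∑ k ∈ range (n+1), c k * legendreL k t := by
      simp only [Finset.sum_mul]
      rw [Finset.sum_comm]
      refine Finset.sum_congr rfl fun k hk => ?_
      rw [part2 k (by simpa [Nat.lt_succ_iff] using hk) t, Finset.mul_sum]
      exact Finset.sum_congr rfl fun j hj => by ring
    simp only [sub_mul, Finset.sum_sub_distrib, h2, h t, sub_self]
  intro j hj
  have := bern_inj n _ hz j hj
  linarith [this]
end

section
/- The columns of the Legendre-to-Bernstein conversion matrix M_n are pairwise orthogonal: for 0 ≤ k ≠ ℓ ≤ n, Σ_{j=0}^n M_{n,jk}·M_{n,jℓ} = 0, where M_{n,jk} = [√(2k+1)/C(n,j)]·Σ_{i=max(0,j+k−n)}^{min(j,k)} (−1)^{k+i} C(k,i)² C(n−k, j−i). -/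
namespace S16
open Polynomial Finset
noncomputable def a (k i : ℕ) : ℝ := (-1)^(k+i) * (k.choose i : ℝ)^2

noncomputable def f (k : ℕ) : ℝ[X] := ∑ i ∈ range (k+1), C (a k i) * X^i

lemma a_eq_zero {k i : ℕ} (h : k < i) : a k i = 0 := by
  simp [a, Nat.choose_eq_zero_of_lt h]

lemma coeff_f (k p : ℕ) : (f k).coeff p = a k p := by
  rw [f, finset_sum_coeff]
  simp only [coeff_C_mul, coeff_X_pow, mul_ite, mul_one, mul_zero]
  rw [Finset.sum_ite_eq (range (k+1)) p (fun x => a k x)]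
  split
  · rfl
  · rename_i h
    simp only [mem_range, not_lt] at h
    exact (a_eq_zero (by omega)).symm

lemma a_rec (k i : ℕ) : ((i:ℝ)+1)^2 * a k (i+1) + ((k:ℝ)-i)^2 * a k i = 0 := by
  rcases lt_or_ge i k with h | h
  · have hn := Nat.choose_succ_right_eq k i
    have hc : ((k.choose (i+1) : ℝ)) * ((i:ℝ)+1) = (k.choose i : ℝ) * ((k:ℝ) - (i:ℝ)) := by
      have h2 := congrArg (Nat.cast (R := ℝ)) hn
      push_cast [Nat.cast_sub h.le] at h2
      linarith [h2]
    simp only [a]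
    have hs : (-1:ℝ)^(k+(i+1)) = -(-1:ℝ)^(k+i) := by
      rw [← add_assoc, pow_succ]; ring
    rw [hs]
    linear_combination (-(-1:ℝ)^(k+i) * ((k.choose (i+1):ℝ)*((i:ℝ)+1) + (k.choose i:ℝ)*((k:ℝ)-(i:ℝ)))) * hc
  · have h1 : a k (i+1) = 0 := a_eq_zero (by omega)
    have h2 : ((k:ℝ)-i)^2 * a k i = 0 := by
      rcases eq_or_lt_of_le h with rfl | h
      · simp
      · rw [a_eq_zero h]; ring
    rw [h1]; rw [mul_zero, zero_add, h2]

lemma ode_f (k : ℕ) :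
    X * derivative (derivative (f k)) + X*(X*derivative (derivative (f k))) + derivative (f k)
    + C (1-2*(k:ℝ)) * (X * derivative (f k)) + C ((k:ℝ)^2) * f k = 0 := by
  ext t
  match t with
  | 0 =>
    simp only [coeff_add, mul_coeff_zero, coeff_X_zero, zero_mul, coeff_C_mul,
      coeff_derivative, coeff_f, coeff_zero, Nat.cast_zero, coeff_C_zero]
    linear_combination a_rec k 0
  | 1 =>
    simp only [coeff_add, coeff_X_mul, mul_coeff_zero, coeff_X_zero, zero_mul, coeff_C_mul,
      coeff_derivative, coeff_f, coeff_zero, Nat.cast_zero, Nat.cast_one, coeff_C_zero]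
    linear_combination (norm := (push_cast; ring1)) a_rec k 1
  | (m+2) =>
    simp only [coeff_add, coeff_X_mul, coeff_C_mul, coeff_derivative, coeff_f, coeff_zero]
    linear_combination (norm := (push_cast; ring1)) a_rec k (m+2)

noncomputable def g (d : ℕ) : ℝ[X] := (X+1)^d

lemma deriv_g (d : ℕ) : derivative (g d) = C (d:ℝ) * (X+1)^(d-1) := by
  rw [g, derivative_pow]
  simp

lemma h1 (d : ℕ) : (X+1) * derivative (g d) = C (d:ℝ) * g d := by
  rw [deriv_g]
  match d with
  | 0 => simp
  | (d+1) =>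
    rw [g, show d + 1 - 1 = d from rfl]
    ring

lemma h2 (d : ℕ) : (X+1)^2 * derivative (derivative (g d)) = C ((d:ℝ)*((d:ℝ)-1)) * g d := by
  rw [deriv_g, derivative_C_mul, derivative_pow, derivative_add, derivative_X, derivative_one]
  match d with
  | 0 => simp
  | 1 => simp
  | (d+2) =>
    have hcc : (((d:ℕ)+2:ℕ):ℝ) * ((((d:ℕ)+2:ℕ):ℝ) - 1) = (((d:ℕ)+2:ℕ):ℝ) * (((d:ℕ)+1:ℕ):ℝ) := by
      push_cast; ring
    rw [g, hcc, C_mul, show d + 2 - 1 = d + 1 from rfl, show d + 1 - 1 = d from rfl,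
      show (d:ℕ) + 2 = d + 1 + 1 from rfl, pow_succ, pow_succ]
    ring

noncomputable def F (n k : ℕ) : ℝ[X] := f k * g (n-k)

lemma ode_F (n k : ℕ) (hk : k ≤ n) :
    X * derivative (derivative (F n k)) + C 2 * (X*(X*derivative (derivative (F n k))))
    + X*(X*(X*derivative (derivative (F n k)))) + derivative (F n k)
    + C (2-2*(n:ℝ)) * (X * derivative (F n k)) + C (1-2*(n:ℝ)) * (X*(X*derivative (F n k)))
    + C ((n:ℝ)^2) * (X * F n k) + C ((k:ℝ)^2+(k:ℝ)-(n:ℝ)) * F n k = 0 := by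
  have hF1 : derivative (F n k) = derivative (f k) * g (n-k) + f k * derivative (g (n-k)) := by
    rw [F, derivative_mul]
  have hF2 : derivative (derivative (F n k)) =
      derivative (derivative (f k)) * g (n-k) + 2*(derivative (f k) * derivative (g (n-k)))
      + f k * derivative (derivative (g (n-k))) := by
    rw [hF1, derivative_add, derivative_mul, derivative_mul]; ring
  have hd : ((n-k : ℕ) : ℝ) = (n:ℝ) - (k:ℝ) := by
    push_cast [hk]; ring
  have hg1 := h1 (n-k)
  have hg2 := h2 (n-k)
  rw [hd] at hg1 hg2
  have hf := ode_f k
  rw [hF2, hF1, F]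
  have hC2 : (C (2:ℝ)) = (2:ℝ[X]) := map_ofNat C 2
  simp only [map_sub, map_add, map_mul, map_pow, map_one, map_ofNat, hC2] at *
  linear_combination ((X+1) * g (n-k)) * hf
    + ((2:ℝ[X]) * X * (X+1) * derivative (f k) + (X+1) * f k - 2 * C (n:ℝ) * (X * f k)) * hg1
    + (X * f k) * hg2

noncomputable def s (n k j : ℕ) : ℝ := (F n k).coeff j

lemma natDegree_F (n k : ℕ) (hk : k ≤ n) : (F n k).natDegree ≤ n := by
  have h1 : (f k).natDegree ≤ k := by
    apply Polynomial.natDegree_sum_le_of_forall_le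
    intro i hi
    refine le_trans (natDegree_C_mul_le _ _) ?_
    simp only [natDegree_X_pow]
    exact Nat.lt_succ_iff.mp (mem_range.mp hi)
  have h2 : (g (n-k)).natDegree ≤ n - k := by
    simp only [g]
    refine le_trans natDegree_pow_le ?_
    have hx : (X + (1:ℝ[X])).natDegree ≤ 1 := by
      have := natDegree_X_add_C (1:ℝ)
      simp only [map_one] at this
      omega
    calc (n-k) * (X+(1:ℝ[X])).natDegree ≤ (n-k)*1 := Nat.mul_le_mul_left _ hx
    _ ≤ n - k := by omega
  refine le_trans (natDegree_mul_le) ?_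
  omega

lemma s_rec (n k : ℕ) (hk : k ≤ n) (m : ℕ) :
    ((m:ℝ)+2)^2 * s n k (m+2) + ((n:ℝ)-(m:ℝ))^2 * s n k m
    - (2*((m:ℝ)+1)*((n:ℝ)-(m:ℝ)-1) + (n:ℝ) - (k:ℝ)*((k:ℝ)+1)) * s n k (m+1) = 0 := by
  have h := congrArg (fun p => p.coeff (m+1)) (ode_F n k hk)
  simp only [s]
  match m, h with
  | 0, h =>
    simp only [coeff_add, coeff_X_mul, coeff_C_mul, coeff_derivative, coeff_zero,
      mul_coeff_zero, coeff_X_zero, zero_mul, Nat.cast_zero, Nat.cast_one, coeff_C_zero] at h ⊢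
    linear_combination (norm := (push_cast; ring1)) h
  | 1, h =>
    simp only [coeff_add, coeff_X_mul, coeff_C_mul, coeff_derivative, coeff_zero,
      mul_coeff_zero, coeff_X_zero, zero_mul, Nat.cast_zero, Nat.cast_one, coeff_C_zero] at h ⊢
    linear_combination (norm := (push_cast; ring1)) h
  | (m+2), h =>
    simp only [coeff_add, coeff_X_mul, coeff_C_mul, coeff_derivative, coeff_zero,
      mul_coeff_zero, coeff_X_zero, zero_mul, coeff_C_zero] at h ⊢
    linear_combination (norm := (push_cast; ring1)) h

lemma s_rec0 (n k : ℕ) (hk : k ≤ n) :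
    s n k 1 + ((k:ℝ)*((k:ℝ)+1) - (n:ℝ)) * s n k 0 = 0 := by
  have h := congrArg (fun p => p.coeff 0) (ode_F n k hk)
  simp only [coeff_add, coeff_C_mul, coeff_derivative, coeff_zero,
    mul_coeff_zero, coeff_X_zero, zero_mul, Nat.cast_zero, coeff_C_zero] at h
  simp only [s]
  linear_combination (norm := (push_cast; ring1)) h

lemma sdeg (n k : ℕ) (hk : k ≤ n) {j : ℕ} (hj : n < j) : s n k j = 0 :=
  coeff_eq_zero_of_natDegree_lt (lt_of_le_of_lt (natDegree_F n k hk) hj)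

noncomputable def cc (n k j : ℕ) : ℝ := s n k j / (n.choose j : ℝ)

lemma s_eq (n k : ℕ) (hk : k ≤ n) (j : ℕ) : s n k j = (n.choose j : ℝ) * cc n k j := by
  rcases Nat.lt_or_ge n j with h | h
  · rw [sdeg n k hk h]
    rw [Nat.choose_eq_zero_of_lt h]
    simp [cc, Nat.choose_eq_zero_of_lt h, sdeg n k hk h]
  · have hpos : 0 < n.choose j := Nat.choose_pos h
    rw [cc]
    field_simp

noncomputable def γ (n j : ℕ) : ℝ := (j:ℝ) * ((n:ℝ) + 1 - (j:ℝ))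

noncomputable def Eop (n : ℕ) (u : ℕ → ℝ) (j : ℕ) : ℝ :=
  γ n (j+1) * u (j+1) + γ n j * u (j-1) - (γ n j + γ n (j+1)) * u j

-- cast of choose identity
lemma choose_id (n m : ℕ) (hm : m ≤ n) :
    ((n:ℝ) - m) * (n.choose m : ℝ) = ((m:ℝ)+1) * (n.choose (m+1) : ℝ) := by
  have h := Nat.choose_succ_right_eq n m
  have := congrArg (Nat.cast (R := ℝ)) h
  push_cast [Nat.cast_sub hm] at this
  linarith

lemma c_rec (n k : ℕ) (hk : k ≤ n) (j : ℕ) (hj : j ≤ n) :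
    Eop n (cc n k) j = -((k:ℝ)*((k:ℝ)+1)) * cc n k j := by
  match j with
  | 0 =>
    have h := s_rec0 n k hk
    rw [s_eq n k hk 1, s_eq n k hk 0] at h
    simp only [Eop, γ]
    push_cast [Nat.choose_one_right, Nat.choose_zero_right] at h ⊢
    linear_combination h
  | (m+1) =>
    have h := s_rec n k hk m
    rw [s_eq n k hk (m+2), s_eq n k hk (m+1), s_eq n k hk m] at h
    have hm1 : m ≤ n := by omega
    have hm2 : m + 1 ≤ n := hj
    have e1 := choose_id n m hm1
    have e2 := choose_id n (m+1) hm2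
    have hC : (0:ℝ) < (n.choose (m+1) : ℝ) := by
      exact_mod_cast Nat.choose_pos hm2
    simp only [Eop, γ, Nat.add_sub_cancel]
    push_cast at h e1 e2 ⊢
    -- goal: γ(m+2)*cc(m+2) + γ(m+1)*cc m - (γ(m+1)+γ(m+2))*cc(m+1) = -k(k+1) cc(m+1)
    refine mul_left_cancel₀ (ne_of_gt hC) ?_
    linear_combination h + ((m:ℝ)+2)*cc n k (m+2)*e2 - ((n:ℝ)-(m:ℝ))*cc n k m*e1

lemma γ_zero_left (n : ℕ) : γ n 0 = 0 := by simp [γ]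

lemma γ_zero_right (n : ℕ) : γ n (n+1) = 0 := by simp [γ]

lemma sum_Eop_key (n : ℕ) (u v : ℕ → ℝ) :
    ∑ j ∈ range (n+1), Eop n u j * v j
      = (∑ j ∈ range n, γ n (j+1) * (u (j+1) * v j + u j * v (j+1)))
        - ∑ j ∈ range (n+1), (γ n j + γ n (j+1)) * (u j * v j) := by
  simp only [Eop]
  have expand : ∀ j, (γ n (j+1) * u (j+1) + γ n j * u (j-1) - (γ n j + γ n (j+1)) * u j) * v j
      = γ n (j+1) * u (j+1) * v j + γ n j * u (j-1) * v j - (γ n j + γ n (j+1)) * (u j * v j) := by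
    intro j; ring
  simp_rw [expand]
  rw [Finset.sum_sub_distrib, Finset.sum_add_distrib]
  have hA : ∑ j ∈ range (n+1), γ n (j+1) * u (j+1) * v j
      = ∑ j ∈ range n, γ n (j+1) * u (j+1) * v j := by
    rw [Finset.sum_range_succ, γ_zero_right]; simp
  have hB : ∑ j ∈ range (n+1), γ n j * u (j-1) * v j
      = ∑ j ∈ range n, γ n (j+1) * u j * v (j+1) := by
    rw [Finset.sum_range_succ', γ_zero_left]
    simp only [Nat.add_sub_cancel, zero_mul, add_zero, mul_zero]
  rw [hA, hB, ← Finset.sum_add_distrib]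
  congr 1
  · apply Finset.sum_congr rfl; intro j _; ring

lemma sum_Eop_symm (n : ℕ) (u v : ℕ → ℝ) :
    ∑ j ∈ range (n+1), Eop n u j * v j = ∑ j ∈ range (n+1), Eop n v j * u j := by
  rw [sum_Eop_key, sum_Eop_key]
  congr 1
  · apply Finset.sum_congr rfl; intro j _; ring
  · apply Finset.sum_congr rfl; intro j _; ring

lemma coeff_F_icc (n k : ℕ) (hk : k ≤ n) (j : ℕ) :
    (F n k).coeff j
      = ∑ i ∈ Finset.Icc (max 0 (j + k - n)) (min j k), a k i * ((n-k).choose (j-i) : ℝ) := by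
  rw [F, coeff_mul, Finset.Nat.sum_antidiagonal_eq_sum_range_succ_mk]
  have hg : ∀ m, (g (n-k)).coeff m = ((n-k).choose m : ℝ) := fun m => by
    simp [g, coeff_X_add_one_pow]
  simp_rw [coeff_f, hg]
  have hsub : Finset.Icc (max 0 (j + k - n)) (min j k) ⊆ range (j+1) := by
    intro i hi
    simp only [Finset.mem_Icc, mem_range] at hi ⊢
    omega
  refine (Finset.sum_subset hsub ?_).symm
  intro p hp hnp
  simp only [Finset.mem_Icc, mem_range, not_and_or, not_le] at hp hnp
  rcases hnp with h | h
  · have : (n-k).choose (j-p) = 0 := Nat.choose_eq_zero_of_lt (by omega)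
    rw [this]; simp
  · rw [a_eq_zero (show k < p by omega)]; ring



lemma Mentry_eq (n j k : ℕ) (hk : k ≤ n) :
    Mentry n j k = Real.sqrt (2 * k + 1) * cc n k j := by
  rw [Mentry, cc, s, coeff_F_icc n k hk j]
  simp only [a]
  ring

lemma quad_ne (k l : ℕ) (hkl : k ≠ l) : (k:ℝ)*((k:ℝ)+1) ≠ (l:ℝ)*((l:ℝ)+1) := by
  have hne : (k:ℝ) ≠ (l:ℝ) := by exact_mod_cast fun h => hkl (by exact_mod_cast h)
  rcases lt_or_gt_of_ne hne with h | h
  · have h0 : (0:ℝ) ≤ (k:ℝ) := Nat.cast_nonneg k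
    nlinarith
  · have h0 : (0:ℝ) ≤ (l:ℝ) := Nat.cast_nonneg l
    nlinarith

theorem main (n k l : ℕ) (hk : k ≤ n) (hl : l ≤ n) (hkl : k ≠ l) :
    ∑ j ∈ Finset.range (n + 1), Mentry n j k * Mentry n j l = 0 := by
  set u := cc n k with hu
  set v := cc n l with hv
  have hS1 : ∑ j ∈ range (n+1), Eop n u j * v j
      = -((k:ℝ)*((k:ℝ)+1)) * ∑ j ∈ range (n+1), u j * v j := by
    rw [Finset.mul_sum]
    apply Finset.sum_congr rfl
    intro j hj
    rw [c_rec n k hk j (Nat.lt_succ_iff.mp (mem_range.mp hj))]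
    ring
  have hS2 : ∑ j ∈ range (n+1), Eop n v j * u j
      = -((l:ℝ)*((l:ℝ)+1)) * ∑ j ∈ range (n+1), u j * v j := by
    rw [Finset.mul_sum]
    apply Finset.sum_congr rfl
    intro j hj
    rw [c_rec n l hl j (Nat.lt_succ_iff.mp (mem_range.mp hj))]
    ring
  have hsym := sum_Eop_symm n u v
  rw [hS1, hS2] at hsym
  have hS : ∑ j ∈ range (n+1), u j * v j = 0 := by
    by_contra h
    apply quad_ne k l hkl
    have h2 := mul_right_cancel₀ h hsym
    linarith
  calc ∑ j ∈ Finset.range (n + 1), Mentry n j k * Mentry n j l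
      = ∑ j ∈ range (n+1), (Real.sqrt (2*k+1) * Real.sqrt (2*l+1)) * (u j * v j) := by
        apply Finset.sum_congr rfl
        intro j _
        rw [Mentry_eq n j k hk, Mentry_eq n j l hl]; ring
    _ = (Real.sqrt (2*k+1) * Real.sqrt (2*l+1)) * ∑ j ∈ range (n+1), u j * v j := by
        rw [Finset.mul_sum]
    _ = 0 := by rw [hS]; ring

end S16

/-- The columns of the Legendre-to-Bernstein conversion matrix M_n are pairwise orthogonal:
for 0 ≤ k ≠ ℓ ≤ n, Σ_{j=0}^n M_{n,jk}·M_{n,jℓ} = 0. -/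
theorem stmt16 (n k l : ℕ) (hk : k ≤ n) (hl : l ≤ n) (hkl : k ≠ l) :
    ∑ j ∈ Finset.range (n + 1), Mentry n j k * Mentry n j l = 0 := by
  exact S16.main n k l hk hl hkl
end

section
/- For any nonnegative integer m and any complex numbers d_0, …, d_m, the polynomial p(t) = Σ_{k=0}^m d_k b^m_k(t) satisfies ∫₀¹ |p(t)|² dt ≤ (1/(m+1))·Σ_{k=0}^m |d_k|², i.e. ‖p‖ ≤ ‖(d_0,…,d_m)‖₂/√(m+1); equivalently, the largest singular value of the Bernstein-to-Legendre conversion matrix M_m^{-1} equals 1/√(m+1). -/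
open MeasureTheory

lemma bern_cont (n k : ℕ) : Continuous (bern n k) := by
  unfold bern; continuity

lemma bern_nonneg {n k : ℕ} {t : ℝ} (h0 : 0 ≤ t) (h1 : t ≤ 1) : 0 ≤ bern n k t := by
  unfold bern
  have : (0:ℝ) ≤ 1 - t := by linarith
  positivity

lemma sum_bern (m : ℕ) (t : ℝ) : ∑ k ∈ Finset.range (m + 1), bern m k t = 1 := by
  have h := add_pow t (1 - t) m
  simp only [add_sub_cancel, one_pow] at h
  conv_rhs => rw [h]
  apply Finset.sum_congr rfl
  intro k _
  unfold bern
  ring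

lemma prod_eq (m k : ℕ) (hk : k ≤ m) :
    m.choose k * Nat.factorial (m - k) * (m + 1) = ∏ j ∈ Finset.range (m - k + 1), (k + 1 + j) := by
  have key : ∀ n a : ℕ, Nat.factorial a * ∏ j ∈ Finset.range n, (a + 1 + j) = Nat.factorial (a + n) := by
    intro n a
    induction n with
    | zero => simp
    | succ n ih =>
      rw [Finset.prod_range_succ, ← mul_assoc, ih]
      rw [show a + (n+1) = (a + n) + 1 by ring, Nat.factorial_succ]
      ring
  have h1 := key (m - k + 1) k
  rw [show k + (m - k + 1) = m + 1 by omega] at h1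
  have h2 : m.choose k * Nat.factorial k * Nat.factorial (m - k) = Nat.factorial m := Nat.choose_mul_factorial_mul_factorial hk
  have h3 : Nat.factorial (m + 1) = (m + 1) * Nat.factorial m := Nat.factorial_succ m
  have hkfac : 0 < Nat.factorial k := Nat.factorial_pos k
  apply Nat.eq_of_mul_eq_mul_left hkfac
  rw [h1, h3, ← h2]
  ring

lemma integral_bern (m k : ℕ) (hk : k ≤ m) :
    ∫ t in (0:ℝ)..1, bern m k t = 1 / ((m : ℝ) + 1) := by
  have hbeta := Complex.betaIntegral_eval_nat_add_one_right
    (u := (k : ℂ) + 1) (by simp; positivity) (m - k)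
  rw [Complex.betaIntegral] at hbeta
  have hint : (∫ x in (0:ℝ)..1, (x:ℂ) ^ ((k:ℂ) + 1 - 1) * ((1:ℂ) - x) ^ (((m-k:ℕ):ℂ) + 1 - 1))
      = ((∫ x in (0:ℝ)..1, x ^ k * (1 - x) ^ (m - k) : ℝ) : ℂ) := by
    rw [← intervalIntegral.integral_ofReal]
    apply intervalIntegral.integral_congr
    intro x _
    simp only [add_sub_cancel_right]
    rw [Complex.cpow_natCast, Complex.cpow_natCast]
    push_cast
    ring
  rw [hint] at hbeta
  have hprod : (∏ j ∈ Finset.range (m - k + 1), ((k:ℂ) + 1 + j))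
      = ((∏ j ∈ Finset.range (m - k + 1), (k + 1 + j) : ℕ) : ℂ) := by
    push_cast; rfl
  rw [hprod, ← prod_eq m k hk] at hbeta
  have hPpos : (0:ℝ) < (m.choose k * Nat.factorial (m - k) * (m + 1) : ℕ) := by
    have := Nat.choose_pos hk
    have := Nat.factorial_pos (m - k)
    positivity
  have hreal : (∫ x in (0:ℝ)..1, x ^ k * (1 - x) ^ (m - k) : ℝ)
      = (Nat.factorial (m - k) : ℝ) / ((m.choose k * Nat.factorial (m - k) * (m + 1) : ℕ) : ℝ) := by
    have h' : ((∫ x in (0:ℝ)..1, x ^ k * (1 - x) ^ (m - k) : ℝ) : ℂ)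
        = (((Nat.factorial (m - k) : ℝ) / ((m.choose k * Nat.factorial (m - k) * (m + 1) : ℕ) : ℝ) : ℝ) : ℂ) := by
      rw [hbeta]; push_cast; ring
    exact_mod_cast h'
  have : ∫ t in (0:ℝ)..1, bern m k t
      = (m.choose k : ℝ) * ∫ x in (0:ℝ)..1, x ^ k * (1 - x) ^ (m - k) := by
    rw [← intervalIntegral.integral_const_mul]
    apply intervalIntegral.integral_congr
    intro x _
    unfold bern
    ring
  rw [this, hreal]
  have hc : (0:ℝ) < (m.choose k : ℝ) := by exact_mod_cast Nat.choose_pos hk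
  have hf : (0:ℝ) < (Nat.factorial (m - k) : ℝ) := by exact_mod_cast Nat.factorial_pos (m - k)
  push_cast
  field_simp

/-- For any complex coefficients d_0,…,d_m, the polynomial p(t) = Σ_{k=0}^m d_k b^m_k(t)
satisfies ∫₀¹ |p(t)|² dt ≤ (1/(m+1))·Σ_{k=0}^m |d_k|², i.e.
‖p‖ ≤ ‖(d_0,…,d_m)‖₂/√(m+1); moreover this bound is attained by some nonzero coefficient
vector, i.e. the largest singular value of the Bernstein-to-Legendre conversion matrix
M_m⁻¹ equals 1/√(m+1). -/
theorem stmt18 (m : ℕ) :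
    (∀ d : ℕ → ℂ,
      (∫ t in (0:ℝ)..1,
          ‖∑ k ∈ Finset.range (m + 1), d k * (bern m k t : ℂ)‖ ^ 2)
        ≤ (1 / ((m : ℝ) + 1)) * ∑ k ∈ Finset.range (m + 1), ‖d k‖ ^ 2) ∧
    (∃ d : ℕ → ℂ, (∃ k ∈ Finset.range (m + 1), d k ≠ 0) ∧
      (∫ t in (0:ℝ)..1,
          ‖∑ k ∈ Finset.range (m + 1), d k * (bern m k t : ℂ)‖ ^ 2)
        = (1 / ((m : ℝ) + 1)) * ∑ k ∈ Finset.range (m + 1), ‖d k‖ ^ 2) := by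
  constructor
  · intro d
    have hcontL : Continuous (fun t : ℝ =>
        ‖∑ k ∈ Finset.range (m + 1), d k * (bern m k t : ℂ)‖ ^ 2) := by
      apply Continuous.pow
      apply continuous_norm.comp
      apply continuous_finset_sum
      intro k _
      exact continuous_const.mul (Complex.continuous_ofReal.comp (bern_cont m k))
    have hcontR : Continuous (fun t : ℝ =>
        ∑ k ∈ Finset.range (m + 1), ‖d k‖ ^ 2 * bern m k t) := by
      apply continuous_finset_sum
      intro k _
      exact continuous_const.mul (bern_cont m k)
    have hpt : ∀ t ∈ Set.Icc (0:ℝ) 1,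
        ‖∑ k ∈ Finset.range (m + 1), d k * (bern m k t : ℂ)‖ ^ 2
          ≤ ∑ k ∈ Finset.range (m + 1), ‖d k‖ ^ 2 * bern m k t := by
      rintro t ⟨h0, h1⟩
      have hb : ∀ k, 0 ≤ bern m k t := fun k => bern_nonneg h0 h1
      have h2 : ‖∑ k ∈ Finset.range (m + 1), d k * (bern m k t : ℂ)‖
          ≤ ∑ k ∈ Finset.range (m + 1), ‖d k‖ * bern m k t := by
        refine (norm_sum_le _ _).trans (le_of_eq ?_)
        refine Finset.sum_congr rfl fun k _ => ?_
        rw [norm_mul, Complex.norm_real, Real.norm_eq_abs, abs_of_nonneg (hb k)]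
      have h3 : (∑ k ∈ Finset.range (m + 1), ‖d k‖ * bern m k t) ^ 2
          ≤ (∑ k ∈ Finset.range (m + 1), ‖d k‖ ^ 2 * bern m k t)
            * ∑ k ∈ Finset.range (m + 1), bern m k t := by
        refine Finset.sum_sq_le_sum_mul_sum_of_sq_eq_mul _
          (fun k _ => mul_nonneg (sq_nonneg _) (hb k)) (fun k _ => hb k)
          (fun k _ => by ring)
      rw [sum_bern, mul_one] at h3
      calc ‖∑ k ∈ Finset.range (m + 1), d k * (bern m k t : ℂ)‖ ^ 2
          ≤ (∑ k ∈ Finset.range (m + 1), ‖d k‖ * bern m k t) ^ 2 := by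
            apply pow_le_pow_left₀ (norm_nonneg _) h2
        _ ≤ _ := h3
    have hle := intervalIntegral.integral_mono_on (μ := volume) (by norm_num : (0:ℝ) ≤ 1)
      (hcontL.intervalIntegrable 0 1) (hcontR.intervalIntegrable 0 1) hpt
    refine hle.trans (le_of_eq ?_)
    rw [intervalIntegral.integral_finset_sum]
    · rw [Finset.mul_sum]
      refine Finset.sum_congr rfl fun k hk => ?_
      rw [intervalIntegral.integral_const_mul,
        integral_bern m k (Nat.lt_succ_iff.mp (Finset.mem_range.mp hk))]
      ring
    · intro k _
      exact (continuous_const.mul (bern_cont m k)).intervalIntegrable 0 1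
  · refine ⟨fun _ => 1, ⟨0, Finset.mem_range.mpr (Nat.succ_pos m), one_ne_zero⟩, ?_⟩
    have hsum : ∀ t : ℝ, ∑ k ∈ Finset.range (m + 1), (1:ℂ) * (bern m k t : ℂ) = 1 := by
      intro t
      simp only [one_mul]
      rw [← Complex.ofReal_sum, sum_bern, Complex.ofReal_one]
    have hL : (∫ t in (0:ℝ)..1,
        ‖∑ k ∈ Finset.range (m + 1), (1:ℂ) * (bern m k t : ℂ)‖ ^ 2) = 1 := by
      simp only [hsum, norm_one, one_pow]
      simp
    rw [hL]
    simp only [norm_one, one_pow, Finset.sum_const, Finset.card_range, nsmul_eq_mul, mul_one]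
    field_simp
    push_cast
    ring
end
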